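/- Let n ≥ 5 be an integer coprime to 6, and suppose n divides t - 1 where t > 2 is even. If every odd i with 1 ≤ i < 2t and i ≢ 1 (mod n) satisfies C(2t, i) ≡ 0 (mod 2), and additionally the Laurent polynomial F(x+x⁻¹) over F_2 (with F(x) = ((x+1)^t+1)/x) lies in F_2[x^n, x^{-n}], then the vanishing of the coefficients of x^{t-3} and x^{t-7} forces t = 6. -/

import Mathlib

open LaurentPolynomial

open Polynomial


private lemma lucas2 (m r : ℕ) : ((m.choose r : ZMod 2)) =
    ((m % 2).choose (r % 2) : ZMod 2) * ((m / 2).choose (r / 2) : ZMod 2) := by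
  have h := @Choose.choose_modEq_choose_mod_mul_choose_div m r 2 ⟨Nat.prime_two⟩
  have h2 := (ZMod.intCast_eq_intCast_iff _ _ _).mpr h
  push_cast at h2
  exact_mod_cast h2

private lemma toLaurent_apply_nat (p : Polynomial (ZMod 2)) (m : ℕ) :
    (toLaurent p).coeff (m : ℤ) = p.coeff m := by
  rw [LaurentPolynomial.coeff_toLaurent]
  exact Finsupp.mapDomain_apply Nat.castEmbedding.injective p.toFinsupp.coeff m

private lemma T_mul_app (a z : ℤ) (f : LaurentPolynomial (ZMod 2)) :
    (T a * f : LaurentPolynomial (ZMod 2)).coeff z = f.coeff (z - a) := by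
  rw [LaurentPolynomial.T, AddMonoidAlgebra.coeff_single_mul_apply, one_mul]
  ring_nf

private lemma one_app (z : ℤ) (h : z ≠ 0) : (1 : LaurentPolynomial (ZMod 2)).coeff z = 0 := by
  rw [← LaurentPolynomial.single_zero_one_eq_one, AddMonoidAlgebra.coeff_single, Finsupp.single_apply_eq_zero]
  intro h'; exact absurd h' h

private lemma hq_base : reflect 2 (X^2+X+1 : Polynomial (ZMod 2)) = X^2+X+1 := by
  have h0 : reflect 2 (1 : Polynomial (ZMod 2)) = X^2 := by
    rw [reflect_one]
  have h1 : reflect 2 (X : Polynomial (ZMod 2)) = X := by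
    have := reflect_monomial 2 1 (R := ZMod 2)
    simpa [revAt_le] using this
  have h2 : reflect 2 (X^2 : Polynomial (ZMod 2)) = 1 := by
    have := reflect_monomial 2 2 (R := ZMod 2)
    simp [revAt_le] at this
    simpa [revAt_le] using this
  rw [reflect_add, reflect_add, h0, h1, h2]
  ring

private lemma refl_q : ∀ m : ℕ,
    reflect (2*m) ((X^2+X+1 : Polynomial (ZMod 2))^m) = (X^2+X+1)^m := by
  intro m
  induction m with
  | zero => simp [reflect_one]
  | succ m ih =>
    have hd1 : ((X^2+X+1 : Polynomial (ZMod 2))^m).natDegree ≤ 2*m := by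
      apply (natDegree_pow_le).trans
      have : (X^2+X+1 : Polynomial (ZMod 2)).natDegree ≤ 2 := by compute_degree
      nlinarith
    have hd2 : (X^2+X+1 : Polynomial (ZMod 2)).natDegree ≤ 2 := by compute_degree
    rw [pow_succ, show 2*(m+1) = 2*m + 2 by ring, reflect_mul _ _ hd1 hd2, ih, hq_base]

private lemma coeff_symm (m j : ℕ) (hj : j ≤ 2*m) :
    ((X^2+X+1 : Polynomial (ZMod 2))^m).coeff (2*m - j)
      = ((X^2+X+1 : Polynomial (ZMod 2))^m).coeff j := by
  conv_rhs => rw [← refl_q m]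
  rw [coeff_reflect, revAt_le hj]

private lemma coeff_low (t j : ℕ) (hj : j ≤ t) :
    ((X^2+X+1 : Polynomial (ZMod 2))^t).coeff j =
      ∑ k ∈ Finset.range (j+1), ((2*(t-k)).choose (j-k) : ZMod 2) * (t.choose k : ZMod 2) := by
  have h2 : (2 : Polynomial (ZMod 2)) = 0 := by
    have := CharP.cast_eq_zero (Polynomial (ZMod 2)) 2
    exact_mod_cast this
  have hsplit : (X^2+X+1 : Polynomial (ZMod 2)) = X + (X+1)^2 := by
    linear_combination (-X : Polynomial (ZMod 2)) * h2
  have hterm : ∀ k : ℕ, ((X:Polynomial (ZMod 2))^k * ((X+1)^2)^(t-k)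
        * (t.choose k : Polynomial (ZMod 2))).coeff j
      = if k ≤ j then ((2*(t-k)).choose (j-k) : ZMod 2) * (t.choose k : ZMod 2) else 0 := by
    intro k
    rw [← pow_mul, show (X:Polynomial (ZMod 2))^k * (X+1)^(2*(t-k))
        * (t.choose k : Polynomial (ZMod 2))
        = ((X+1)^(2*(t-k)) * (t.choose k : Polynomial (ZMod 2))) * X^k from by ring,
      coeff_mul_X_pow']
    split_ifs with h
    · rw [← Polynomial.C_eq_natCast, coeff_mul_C, coeff_X_add_one_pow]
    · rfl
  rw [hsplit, add_pow, finset_sum_coeff]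
  rw [← Finset.sum_subset (Finset.range_subset_range.2 (by omega : j+1 ≤ t+1))]
  · exact Finset.sum_congr rfl fun k hk => by
      rw [hterm k, if_pos (by simpa [Nat.lt_succ_iff] using hk)]
  · intro k hk1 hk2
    rw [hterm k, if_neg (by simp [Nat.lt_succ_iff] at hk2; omega)]

private lemma even_cast {m : ℕ} (h : m % 2 = 0) : (m : ZMod 2) = 0 := by
  obtain ⟨k, rfl⟩ : ∃ k, m = 2*k := ⟨m/2, by omega⟩
  push_cast
  rw [show (2 : ZMod 2) = 0 from rfl]
  ring

private lemma odd_cast {m : ℕ} (h : m % 2 = 1) : (m : ZMod 2) = 1 := by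
  obtain ⟨k, rfl⟩ : ∃ k, m = 2*k+1 := ⟨m/2, by omega⟩
  push_cast
  rw [show (2 : ZMod 2) = 0 from rfl]
  ring


/-- Let `n ≥ 5` be coprime to `6`, `n ∣ t - 1`, `t > 2` even, and
`F(x) = ((x+1)^t + 1)/x` over `F_2`. If `C(2t, i) ≡ 0 (mod 2)` for every odd `i` with
`1 ≤ i < 2t` and `i ≢ 1 (mod n)`, and `F(x + x⁻¹)` lies in `F_2[x^n, x^{-n}]`, then the
vanishing of the coefficients of `x^(t-3)` and `x^(t-7)` forces `t = 6`. -/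
theorem stmt_19 (t n : ℕ) (ht : 2 < t) (hte : Even t) (hn5 : 5 ≤ n)
    (hn6 : Nat.Coprime n 6) (hnt : n ∣ t - 1)
    (F : Polynomial (ZMod 2)) (hF : Polynomial.X * F = (Polynomial.X + 1) ^ t + 1)
    (hbin : ∀ i : ℕ, Odd i → 1 ≤ i → i < 2 * t → ¬ i ≡ 1 [MOD n] →
      2 ∣ Nat.choose (2 * t) i)
    (hmem : ∀ z : ℤ, ¬ (n : ℤ) ∣ z →
      (Polynomial.aeval (T 1 + T (-1) : LaurentPolynomial (ZMod 2)) F).coeff z = 0)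
    (hv3 : (Polynomial.aeval (T 1 + T (-1) : LaurentPolynomial (ZMod 2)) F).coeff ((t : ℤ) - 3) = 0)
    (hv7 : (Polynomial.aeval (T 1 + T (-1) : LaurentPolynomial (ZMod 2)) F).coeff ((t : ℤ) - 7) = 0) :
    t = 6 := by
  have h4 : 4 ≤ t := by obtain ⟨u, hu⟩ := hte; omega
  have ht2 : t % 2 = 0 := by obtain ⟨u, hu⟩ := hte; omega
  set s : LaurentPolynomial (ZMod 2) := T 1 + T (-1) with hs
  set G : LaurentPolynomial (ZMod 2) := Polynomial.aeval s F with hGdef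
  -- the key algebraic identity
  have h1 : s * G = (s+1)^t + 1 := by
    have h := congrArg (Polynomial.aeval s) hF
    simpa using h
  have hs1 : (s + 1 : LaurentPolynomial (ZMod 2)) = T (-1) * toLaurent (X^2+X+1) := by
    have htl : Polynomial.toLaurent (X^2+X+1 : Polynomial (ZMod 2)) = T 2 + T 1 + 1 := by
      simp [map_add, map_pow, Polynomial.toLaurent_X, T_pow]
    rw [htl, mul_add, mul_add, ← T_add, ← T_add, mul_one]
    norm_num [hs]
    ring
  have hpow : ((s+1)^t : LaurentPolynomial (ZMod 2))
      = T (-(t:ℤ)) * toLaurent ((X^2+X+1 : Polynomial (ZMod 2))^t) := by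
    rw [hs1, mul_pow, T_pow, ← map_pow, show ((t:ℕ):ℤ) * (-1) = -(t:ℤ) by ring]
  have Hval : ∀ (z : ℤ) (m : ℕ), (m:ℤ) = (t:ℤ) + z →
      ((s+1)^t : LaurentPolynomial (ZMod 2)).coeff z = ((X^2+X+1 : Polynomial (ZMod 2))^t).coeff m := by
    intro z m hm
    rw [hpow, T_mul_app, show z - (-(t:ℤ)) = ((m:ℕ):ℤ) by omega, toLaurent_apply_nat]
  have mulapp : ∀ z : ℤ, (s * G).coeff z = G.coeff (z-1) + G.coeff (z+1) := by
    intro z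
    rw [hs, add_mul, AddMonoidAlgebra.coeff_add, Finsupp.add_apply, T_mul_app, T_mul_app,
      show z - (-1 : ℤ) = z + 1 by ring]
  have EqC : ∀ z : ℤ, G.coeff (z-1) + G.coeff (z+1)
      = ((s+1)^t : LaurentPolynomial (ZMod 2)).coeff z + (1 : LaurentPolynomial (ZMod 2)).coeff z := by
    intro z
    have h : (s * G).coeff z = ((s+1)^t + 1 : LaurentPolynomial (ZMod 2)).coeff z := by rw [h1]
    rw [mulapp z] at h
    rw [h, AddMonoidAlgebra.coeff_add, Finsupp.add_apply]
  -- zeros of G from hmem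
  have hdt : (n:ℤ) ∣ (t:ℤ) - 1 := by
    obtain ⟨k, hk⟩ := hnt
    refine ⟨k, ?_⟩
    have hc := congrArg (Nat.cast (R := ℤ)) hk
    push_cast [Nat.cast_sub (by omega : 1 ≤ t)] at hc
    exact hc
  have hnle : ∀ c : ℕ, (c = 2 ∨ c = 4 ∨ c = 6) → ¬ (n:ℤ) ∣ (c:ℤ) := by
    intro c hc hd
    have h' : n ∣ c := Int.ofNat_dvd.mp hd
    rcases hc with rfl|rfl|rfl <;>
      have hle := Nat.le_of_dvd (by norm_num) h' <;>
      interval_cases n <;>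
      first
      | (revert h'; decide)
      | (exact absurd hn6 (by decide))
  have gz : ∀ z : ℤ, (z = (t:ℤ)+1 ∨ z = (t:ℤ)-3 ∨ z = (t:ℤ)-5 ∨ z = (t:ℤ)-7) → G.coeff z = 0 := by
    intro z hz
    apply hmem
    intro hd
    rcases hz with rfl|rfl|rfl|rfl
    · refine hnle 2 (by tauto) ?_
      have := dvd_sub hd hdt; convert this using 1; rfl; push_cast; ring
    · refine hnle 2 (by tauto) ?_
      have := dvd_sub hdt hd; convert this using 1; rfl; push_cast; ring
    · refine hnle 4 (by tauto) ?_
      have := dvd_sub hdt hd; convert this using 1; rfl; push_cast; ring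
    · refine hnle 6 (by tauto) ?_
      have := dvd_sub hdt hd; convert this using 1; rfl; push_cast; ring
  -- the four coefficient equations
  have e1 : G.coeff ((t:ℤ)-1) = ((X^2+X+1 : Polynomial (ZMod 2))^t).coeff (2*t) := by
    have h := EqC (t:ℤ)
    rw [Hval (t:ℤ) (2*t) (by push_cast; ring), gz ((t:ℤ)+1) (by tauto), add_zero,
      one_app _ (by omega), add_zero] at h
    exact h
  have e2 : G.coeff ((t:ℤ)-1) = ((X^2+X+1 : Polynomial (ZMod 2))^t).coeff (2*t-2) := by
    have h := EqC ((t:ℤ)-2)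
    rw [show (t:ℤ)-2-1 = (t:ℤ)-3 by ring, show (t:ℤ)-2+1 = (t:ℤ)-1 by ring,
      gz ((t:ℤ)-3) (by tauto), Hval _ (2*t-2) (by omega),
      one_app _ (by omega), add_zero, zero_add] at h
    exact h
  -- first condition : C(t,2) = 1 mod 2
  have key1 : ((X^2+X+1 : Polynomial (ZMod 2))^t).coeff (2*t)
      = ((X^2+X+1 : Polynomial (ZMod 2))^t).coeff (2*t-2) := e1.symm.trans e2
  have c0 : ((X^2+X+1 : Polynomial (ZMod 2))^t).coeff (2*t) = 1 := by
    have h := coeff_symm t 0 (by omega)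
    rw [Nat.sub_zero] at h
    rw [h, coeff_low t 0 (by omega)]
    simp
  have c2 : ((X^2+X+1 : Polynomial (ZMod 2))^t).coeff (2*t-2) = (t.choose 2 : ZMod 2) := by
    rw [coeff_symm t 2 (by omega), coeff_low t 2 (by omega)]
    simp only [Finset.sum_range_succ, Finset.sum_range_zero, Nat.sub_zero, Nat.sub_self]
    rw [show (2:ℕ)-1 = 1 by norm_num]
    have l1 : ((2*t).choose 2 : ZMod 2) = 0 := by
      have l := lucas2 (2*t) 2
      rw [show (2*t)%2 = 0 by omega, show (2*t)/2 = t by omega,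
        show (2:ℕ)%2 = 0 by omega, show (2:ℕ)/2 = 1 by omega] at l
      rw [l]
      simp [Nat.choose_one_right, even_cast (by omega : t % 2 = 0)]
    have l2 : ((t.choose 1 : ZMod 2)) = 0 := by
      simp [Nat.choose_one_right, even_cast (by omega : t % 2 = 0)]
    rw [l1, l2]
    simp
  have hC2 : (t.choose 2 : ZMod 2) = 1 := by rw [← c2, ← key1, c0]
  -- extract t = 4v+2
  have huodd : (t/2) % 2 = 1 := by
    have l := lucas2 t 2
    rw [show t%2 = 0 by omega, show (2:ℕ)%2 = 0 by omega, show (2:ℕ)/2 = 1 by omega,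
      hC2] at l
    simp [Nat.choose_one_right] at l
    rcases Nat.mod_two_eq_zero_or_one (t/2) with h|h
    · rw [even_cast h] at l; exact absurd l (by decide)
    · exact h
  obtain ⟨v, hv⟩ : ∃ v, t = 4*v+2 := ⟨t/4, by omega⟩
  have ht6 : 6 ≤ t := by omega
  -- second condition
  have e3 : ((X^2+X+1 : Polynomial (ZMod 2))^t).coeff (2*t-4) = 0 := by
    have h := EqC ((t:ℤ)-4)
    rw [show (t:ℤ)-4-1 = (t:ℤ)-5 by ring, show (t:ℤ)-4+1 = (t:ℤ)-3 by ring,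
      gz ((t:ℤ)-5) (by tauto), gz ((t:ℤ)-3) (by tauto), Hval _ (2*t-4) (by omega),
      one_app _ (by omega), add_zero, add_zero] at h
    exact h.symm
  have hC4 : (t.choose 4 : ZMod 2) = 1 := by
    have h := e3
    rw [coeff_symm t 4 (by omega), coeff_low t 4 (by omega)] at h
    simp only [Finset.sum_range_succ, Finset.sum_range_zero, Nat.sub_zero, Nat.sub_self] at h
    rw [show (4:ℕ)-1 = 3 by norm_num, show (4:ℕ)-2 = 2 by norm_num,
      show (4:ℕ)-3 = 1 by norm_num] at h
    have l0 : ((2*t).choose 4 : ZMod 2) = 1 := by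
      have l := lucas2 (2*t) 4
      rw [show (2*t)%2 = 0 by omega, show (2*t)/2 = t by omega,
        show (4:ℕ)%2 = 0 by omega, show (4:ℕ)/2 = 2 by omega] at l
      rw [l, hC2]
      simp
    have l1 : ((t.choose 1 : ZMod 2)) = 0 := by
      simp [Nat.choose_one_right, even_cast (by omega : t % 2 = 0)]
    have l2 : ((2*(t-2)).choose 2 : ZMod 2) = 0 := by
      have l := lucas2 (2*(t-2)) 2
      rw [show (2*(t-2))%2 = 0 by omega, show (2*(t-2))/2 = t-2 by omega,
        show (2:ℕ)%2 = 0 by omega, show (2:ℕ)/2 = 1 by omega] at l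
      rw [l]
      simp [Nat.choose_one_right, even_cast (by omega : (t-2) % 2 = 0)]
    have l3 : ((2*(t-3)).choose 1 : ZMod 2) = 0 := by
      simp [Nat.choose_one_right, even_cast (by omega : (2*(t-3)) % 2 = 0)]
    rw [l0, l1, l2, l3] at h
    rcases Nat.mod_two_eq_zero_or_one (t.choose 4) with hh|hh
    · rw [even_cast hh] at h; simp [Nat.choose_zero_right] at h
    · exact odd_cast hh
  -- extract t = 8w+6
  have hvodd : v % 2 = 1 := by
    have l := lucas2 t 4
    rw [show t%2 = 0 by omega, show t/2 = 2*v+1 by omega,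
      show (4:ℕ)%2 = 0 by omega, show (4:ℕ)/2 = 2 by omega, hC4] at l
    have l' := lucas2 (2*v+1) 2
    rw [show (2*v+1)%2 = 1 by omega, show (2*v+1)/2 = v by omega,
      show (2:ℕ)%2 = 0 by omega, show (2:ℕ)/2 = 1 by omega] at l'
    rw [l'] at l
    simp [Nat.choose_one_right] at l
    rcases Nat.mod_two_eq_zero_or_one v with h|h
    · rw [even_cast h] at l; exact absurd l.symm (by decide)
    · exact h
  obtain ⟨w, hw⟩ : ∃ w, t = 8*w+6 := ⟨v/2, by omega⟩
  -- final contradiction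
  by_contra hne
  have hw1 : 1 ≤ w := by omega
  have e4 : ((X^2+X+1 : Polynomial (ZMod 2))^t).coeff (2*t-6) = 0 := by
    have h := EqC ((t:ℤ)-6)
    rw [show (t:ℤ)-6-1 = (t:ℤ)-7 by ring, show (t:ℤ)-6+1 = (t:ℤ)-5 by ring,
      gz ((t:ℤ)-7) (by tauto), gz ((t:ℤ)-5) (by tauto), Hval _ (2*t-6) (by omega),
      one_app _ (by omega), add_zero, add_zero] at h
    exact h.symm
  rw [coeff_symm t 6 (by omega), coeff_low t 6 (by omega)] at e4
  simp only [Finset.sum_range_succ, Finset.sum_range_zero, Nat.sub_zero, Nat.sub_self] at e4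
  rw [show (6:ℕ)-1 = 5 by norm_num, show (6:ℕ)-2 = 4 by norm_num, show (6:ℕ)-3 = 3 by norm_num,
    show (6:ℕ)-4 = 2 by norm_num, show (6:ℕ)-5 = 1 by norm_num] at e4
  have hct3 : (t.choose 3 : ZMod 2) = 0 := by
    have l := lucas2 t 3
    rw [show t%2 = 0 by omega, show (3:ℕ)%2 = 1 by omega] at l
    rw [l]
    simp [Nat.choose]
  have k0 : ((2*t).choose 6 : ZMod 2) = 0 := by
    have l := lucas2 (2*t) 6
    rw [show (2*t)%2 = 0 by omega, show (2*t)/2 = t by omega,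
      show (6:ℕ)%2 = 0 by omega, show (6:ℕ)/2 = 3 by omega] at l
    rw [l, hct3]
    simp
  have k1 : ((t.choose 1 : ZMod 2)) = 0 := by
    simp [Nat.choose_one_right, even_cast (by omega : t % 2 = 0)]
  have k2 : ((2*(t-2)).choose 4 : ZMod 2) = 0 := by
    have l := lucas2 (2*(t-2)) 4
    rw [show (2*(t-2))%2 = 0 by omega, show (2*(t-2))/2 = t-2 by omega,
      show (4:ℕ)%2 = 0 by omega, show (4:ℕ)/2 = 2 by omega] at l
    have l' := lucas2 (t-2) 2
    rw [show (t-2)%2 = 0 by omega, show (t-2)/2 = 4*w+2 by omega,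
      show (2:ℕ)%2 = 0 by omega, show (2:ℕ)/2 = 1 by omega] at l'
    rw [l, l']
    simp [Nat.choose_one_right, even_cast (by omega : (4*w+2) % 2 = 0)]
  have k4 : ((2*(t-4)).choose 2 : ZMod 2) = 0 := by
    have l := lucas2 (2*(t-4)) 2
    rw [show (2*(t-4))%2 = 0 by omega, show (2*(t-4))/2 = t-4 by omega,
      show (2:ℕ)%2 = 0 by omega, show (2:ℕ)/2 = 1 by omega] at l
    rw [l]
    simp [Nat.choose_one_right, even_cast (by omega : (t-4) % 2 = 0)]
  have k5 : ((2*(t-5)).choose 1 : ZMod 2) = 0 := by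
    simp [Nat.choose_one_right, even_cast (by omega : (2*(t-5)) % 2 = 0)]
  have k6 : (t.choose 6 : ZMod 2) = 1 := by
    have l := lucas2 t 6
    rw [show t%2 = 0 by omega, show t/2 = 4*w+3 by omega,
      show (6:ℕ)%2 = 0 by omega, show (6:ℕ)/2 = 3 by omega] at l
    have l' := lucas2 (4*w+3) 3
    rw [show (4*w+3)%2 = 1 by omega, show (4*w+3)/2 = 2*w+1 by omega,
      show (3:ℕ)%2 = 1 by omega, show (3:ℕ)/2 = 1 by omega] at l'
    rw [l, l']
    simp [Nat.choose_one_right, odd_cast (by omega : (2*w+1) % 2 = 1)]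
  rw [k0, k1, k2, k4, k5, k6, hct3] at e4
  simp [Nat.choose_zero_right] at e4
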